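/- Let E be a real normed vector space, C ⊆ E a nonempty compact convex set, f : E → ℝ, Δ : E → E → ℝ, C_f ≥ 0 such that Δ satisfies the curvature bound C_f for f on C, and ε ≥ 0. Let a : ℕ → ℝ with a_t > 0 for all t, A_t = ∑_{i=0}^t a_i, α_t = a_t/A_t, and η_t = ε·(a_t²/A_t)·C_f. Let x, v : ℕ → E with x_0 ∈ C, v_t ∈ C, x_{t+1} = (1 − α_t)·x_t + α_t·v_t, and suppose that for every t, v_t is an η_t-approximate minimizer of the aggregated model Φ_t(v) = ∑_{i=0}^t a_i·Δ x_i (α_i·(v − x_i))/α_i over C, i.e. Φ_t(v_t) ≤ Φ_t(w) + η_t for all w ∈ C. Define L_t = (1/A_t)·( ∑_{i=0}^t a_i·[ f(x_i) + Δ x_i (α_i·(v_t − x_i))/α_i − (α_i/2)·C_f ] − η_t ) and G_t = f(x_{t+1}) − L_t. Then A_0·G_0 ≤ (a_0²/A_0)·C_f·(1+ε), and for all t ≥ 1, A_t·G_t − A_{t−1}·G_{t−1} ≤ (a_t²/A_t)·C_f + η_t ≤ (a_t²/A_t)·C_f·(1+ε). -/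

import Mathlib

/-- ADGT one-step inequality for heavy ball ASFW: with weights `a t > 0`,
`A t = ∑_{i=0}^t a i`, `α t = a t / A t`, tolerances `η t = ε * (a t² / A t) * Cf`,
aggregated model oracle condition for `v t`, lower bound estimate `L` and gap
`G t = f (x (t+1)) - L t`, one has `A 0 * G 0 ≤ (a 0² / A 0) * Cf * (1+ε)` and,
for `t ≥ 1`, `A t * G t - A (t-1) * G (t-1) ≤ (a t² / A t) * Cf + η t
≤ (a t² / A t) * Cf * (1+ε)`. -/
theorem adgt_one_step_heavy_ball
    {E : Type*} [NormedAddCommGroup E] [NormedSpace ℝ E]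
    (C : Set E) (hCne : C.Nonempty) (hCcomp : IsCompact C) (hCconv : Convex ℝ C)
    (f : E → ℝ)
    (Δ : E → E → ℝ) (Cf : ℝ) (hCf : 0 ≤ Cf)
    (hcurv : ∀ x ∈ C, ∀ v ∈ C, ∀ α ∈ Set.Ioc (0:ℝ) 1,
      |f (x + α • (v - x)) - f x - Δ x (α • (v - x))| ≤ α ^ 2 / 2 * Cf)
    (ε : ℝ) (hε : 0 ≤ ε)
    (a A α η : ℕ → ℝ) (ha : ∀ t, 0 < a t)
    (hA : ∀ t : ℕ, A t = ∑ i ∈ Finset.range (t + 1), a i)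
    (hα : ∀ t : ℕ, α t = a t / A t)
    (hη : ∀ t : ℕ, η t = ε * (a t ^ 2 / A t) * Cf)
    (x v : ℕ → E) (hx0 : x 0 ∈ C) (hv : ∀ t, v t ∈ C)
    (hstep : ∀ t : ℕ, x (t + 1) = (1 - α t) • x t + α t • v t)
    (horacle : ∀ t : ℕ, ∀ w ∈ C,
      ∑ i ∈ Finset.range (t + 1), a i * Δ (x i) (α i • (v t - x i)) / α i ≤
        (∑ i ∈ Finset.range (t + 1), a i * Δ (x i) (α i • (w - x i)) / α i) + η t)
    (L G : ℕ → ℝ)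
    (hL : ∀ t : ℕ, L t = (1 / A t) * ((∑ i ∈ Finset.range (t + 1),
      a i * (f (x i) + Δ (x i) (α i • (v t - x i)) / α i - α i / 2 * Cf)) - η t))
    (hG : ∀ t : ℕ, G t = f (x (t + 1)) - L t) :
    A 0 * G 0 ≤ a 0 ^ 2 / A 0 * Cf * (1 + ε) ∧
      ∀ t : ℕ, 1 ≤ t →
        A t * G t - A (t - 1) * G (t - 1) ≤ a t ^ 2 / A t * Cf + η t ∧
          a t ^ 2 / A t * Cf + η t ≤ a t ^ 2 / A t * Cf * (1 + ε) := by
  have hApos : ∀ t, 0 < A t := by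
    intro t
    rw [hA]
    exact Finset.sum_pos (fun i _ => ha i) ⟨0, Finset.mem_range.mpr (Nat.succ_pos t)⟩
  have haA : ∀ t, a t ≤ A t := by
    intro t
    rw [hA]
    exact Finset.single_le_sum (fun i _ => (ha i).le) (Finset.self_mem_range_succ t)
  have hα01 : ∀ t, α t ∈ Set.Ioc (0:ℝ) 1 := by
    intro t
    rw [hα]
    exact ⟨div_pos (ha t) (hApos t), (div_le_one (hApos t)).mpr (haA t)⟩
  have hxC : ∀ t, x t ∈ C := by
    intro t
    induction t with
    | zero => exact hx0
    | succ n ih =>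
      rw [hstep]
      exact hCconv ih (hv n) (by linarith [(hα01 n).2]) (hα01 n).1.le (by ring)
  have hcurv' : ∀ t, f (x (t + 1)) - f (x t) - Δ (x t) (α t • (v t - x t)) ≤
      α t ^ 2 / 2 * Cf := by
    intro t
    have hx' : x (t + 1) = x t + α t • (v t - x t) := by rw [hstep]; module
    have h := hcurv (x t) (hxC t) (v t) (hv t) (α t) (hα01 t)
    rw [← hx'] at h
    exact (abs_le.mp h).2
  have hAG : ∀ t, A t * G t = A t * f (x (t + 1)) - ((∑ i ∈ Finset.range (t + 1),
      a i * (f (x i) + Δ (x i) (α i • (v t - x i)) / α i - α i / 2 * Cf)) - η t) := by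
    intro t
    rw [hG, hL, mul_sub]
    congr 1
    rw [← mul_assoc, mul_one_div, div_self (hApos t).ne', one_mul]
  constructor
  · have hA0 : A 0 = a 0 := by rw [hA]; simp
    have hα0 : α 0 = 1 := by rw [hα, hA0]; exact div_self (ha 0).ne'
    have hc := hcurv' 0
    rw [hα0] at hc
    have h0 := hAG 0
    rw [Finset.sum_range_one, hα0, hA0, div_one] at h0
    have hq : a 0 ^ 2 / A 0 = a 0 := by
      rw [hA0, pow_two, mul_div_assoc, div_self (ha 0).ne', mul_one]
    have hη0 : η 0 = ε * a 0 * Cf := by rw [hη, hq]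
    rw [hq, hA0]
    have hmul0 : a 0 * (f (x (0 + 1)) - f (x 0) - Δ (x 0) ((1:ℝ) • (v 0 - x 0))) ≤
        a 0 * (1 ^ 2 / 2 * Cf) := mul_le_mul_of_nonneg_left hc (ha 0).le
    nlinarith [hmul0, h0, hη0, ha 0]
  · intro t ht
    obtain ⟨s, rfl⟩ : ∃ s, t = s + 1 := ⟨t - 1, (Nat.succ_pred_eq_of_pos ht).symm⟩
    have hsub : s + 1 - 1 = s := rfl
    constructor
    · rw [hsub]
      have expand : ∀ w : E, (∑ i ∈ Finset.range (s + 1),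
          a i * (f (x i) + Δ (x i) (α i • (w - x i)) / α i - α i / 2 * Cf)) =
          (∑ i ∈ Finset.range (s + 1), a i * (f (x i) - α i / 2 * Cf)) +
          ∑ i ∈ Finset.range (s + 1), a i * Δ (x i) (α i • (w - x i)) / α i := by
        intro w
        rw [← Finset.sum_add_distrib]
        exact Finset.sum_congr rfl fun i _ => by ring
      have key : (∑ i ∈ Finset.range (s + 1),
          a i * (f (x i) + Δ (x i) (α i • (v s - x i)) / α i - α i / 2 * Cf)) ≤
          (∑ i ∈ Finset.range (s + 1),
          a i * (f (x i) + Δ (x i) (α i • (v (s + 1) - x i)) / α i - α i / 2 * Cf)) + η s := by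
        have h := horacle s (v (s + 1)) (hv (s + 1))
        rw [expand (v s), expand (v (s + 1))]
        linarith
      have hAsplit : A (s + 1) = A s + a (s + 1) := by
        rw [hA, hA, Finset.sum_range_succ]
      have hg1 := hAG (s + 1)
      have hg0 := hAG s
      set D := Δ (x (s + 1)) (α (s + 1) • (v (s + 1) - x (s + 1))) with hD
      have hsplit : (∑ i ∈ Finset.range (s + 1 + 1),
          a i * (f (x i) + Δ (x i) (α i • (v (s + 1) - x i)) / α i - α i / 2 * Cf)) =
          (∑ i ∈ Finset.range (s + 1),
          a i * (f (x i) + Δ (x i) (α i • (v (s + 1) - x i)) / α i - α i / 2 * Cf)) +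
          a (s + 1) * (f (x (s + 1)) + D / α (s + 1) - α (s + 1) / 2 * Cf) :=
        Finset.sum_range_succ _ _
      have hαpos := (hα01 (s + 1)).1
      have hAp := hApos (s + 1)
      have hane := (ha (s + 1)).ne'
      have hAne := hAp.ne'
      have e1 : a (s + 1) * D / α (s + 1) = A (s + 1) * D := by
        rw [hα]
        field_simp
      have hmul : A (s + 1) * (f (x (s + 1 + 1)) - f (x (s + 1)) - D) ≤
          A (s + 1) * (α (s + 1) ^ 2 / 2 * Cf) :=
        mul_le_mul_of_nonneg_left (hcurv' (s + 1)) hAp.le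
      have e2 : A (s + 1) * (α (s + 1) ^ 2 / 2 * Cf) = a (s + 1) ^ 2 / A (s + 1) * Cf / 2 := by
        rw [hα]
        field_simp
      have e3 : a (s + 1) * (α (s + 1) / 2 * Cf) = a (s + 1) ^ 2 / A (s + 1) * Cf / 2 := by
        rw [hα]
        field_simp
      have e4 : a (s + 1) * (f (x (s + 1)) + D / α (s + 1) - α (s + 1) / 2 * Cf) =
          a (s + 1) * f (x (s + 1)) + a (s + 1) * D / α (s + 1) -
            a (s + 1) * (α (s + 1) / 2 * Cf) := by ring
      have e5 : A s * f (x (s + 1)) =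
          A (s + 1) * f (x (s + 1)) - a (s + 1) * f (x (s + 1)) := by
        rw [hAsplit]; ring
      rw [hg1, hg0, hsplit]
      linarith [key, hmul, e1, e2, e3, e4, e5]
    · apply le_of_eq
      rw [hη]
      ring
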